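/- Let N ≥ 3, let k ≥ 2 be an integer, r > 0 and h ∈ (0,1). Suppose y = (y₁, y₂, y₃, …, y_N) ∈ ℝ^N satisfies y₁ ≥ √(y₁² + y₂²) · cos(π/k) and y₃ ≥ 0. Then for every j = 1, …, k one has |y − x̄_1| ≤ |y − x̄_j|, |y − x̄_j| ≤ |y − x̲_j|, and in particular |y − x̄_1| ≤ |y − x̲_j|. -/

import Mathlib

/-- The upper points `x̄_j = r(√(1−h²)cos(2(j−1)π/k), √(1−h²)sin(2(j−1)π/k), h, 0, …, 0)`. -/
noncomputable def xbar (N k : ℕ) (r h : ℝ) (j : ℕ) : EuclideanSpace ℝ (Fin N) :=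
  (EuclideanSpace.equiv (Fin N) ℝ).symm fun i =>
    if (i : ℕ) = 0 then r * Real.sqrt (1 - h ^ 2) * Real.cos (2 * ((j : ℝ) - 1) * Real.pi / k)
    else if (i : ℕ) = 1 then r * Real.sqrt (1 - h ^ 2) * Real.sin (2 * ((j : ℝ) - 1) * Real.pi / k)
    else if (i : ℕ) = 2 then r * h
    else 0

/-- The lower points `x̲_j = r(√(1−h²)cos(2(j−1)π/k), √(1−h²)sin(2(j−1)π/k), −h, 0, …, 0)`. -/
noncomputable def xunder (N k : ℕ) (r h : ℝ) (j : ℕ) : EuclideanSpace ℝ (Fin N) :=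
  (EuclideanSpace.equiv (Fin N) ℝ).symm fun i =>
    if (i : ℕ) = 0 then r * Real.sqrt (1 - h ^ 2) * Real.cos (2 * ((j : ℝ) - 1) * Real.pi / k)
    else if (i : ℕ) = 1 then r * Real.sqrt (1 - h ^ 2) * Real.sin (2 * ((j : ℝ) - 1) * Real.pi / k)
    else if (i : ℕ) = 2 then -(r * h)
    else 0

set_option maxHeartbeats 1000000 in
/-- Core angle inequality: if `y₁ ≥ √(y₁²+y₂²) cos(π/k)` then for `1 ≤ j ≤ k`
`y₁ cos θ_j + y₂ sin θ_j ≤ y₁` where `θ_j = 2(j−1)π/k`. -/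
lemma key_angle (k : ℕ) (hk : 2 ≤ k) (j : ℕ) (hj1 : 1 ≤ j) (hjk : j ≤ k) (y1 y2 : ℝ)
    (hy : Real.sqrt (y1 ^ 2 + y2 ^ 2) * Real.cos (Real.pi / k) ≤ y1) :
    y1 * Real.cos (2 * ((j : ℝ) - 1) * Real.pi / k)
      + y2 * Real.sin (2 * ((j : ℝ) - 1) * Real.pi / k) ≤ y1 := by
  have hkR : (0 : ℝ) < k := by positivity
  have hα0 : 0 < Real.pi / k := by positivity
  have hα2 : Real.pi / k ≤ Real.pi / 2 := by
    apply div_le_div_of_nonneg_left Real.pi_pos.le (by norm_num)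
    exact_mod_cast hk
  rcases eq_or_lt_of_le hj1 with hj | hj
  · subst hj
    simp
  -- j ≥ 2
  set α := Real.pi / k with hαdef
  set ρ := Real.sqrt (y1 ^ 2 + y2 ^ 2) with hρdef
  have hρ0 : 0 ≤ ρ := Real.sqrt_nonneg _
  have hρsq : ρ ^ 2 = y1 ^ 2 + y2 ^ 2 := Real.sq_sqrt (by positivity)
  set θ := 2 * ((j : ℝ) - 1) * Real.pi / k with hθdef
  have hθα : θ = 2 * ((j : ℝ) - 1) * α := by rw [hαdef, hθdef]; ring
  have hj2 : (2 : ℝ) ≤ (j : ℝ) := by exact_mod_cast hj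
  have hjkR : (j : ℝ) ≤ (k : ℝ) := by exact_mod_cast hjk
  have hθlb : 2 * α ≤ θ := by rw [hθα]; nlinarith [hα0]
  have hθub : θ ≤ 2 * Real.pi - 2 * α := by
    rw [hθα]
    have hkα : (k : ℝ) * α = Real.pi := by
      rw [hαdef]; field_simp
    nlinarith [hα0]
  have hcosα0 : 0 ≤ Real.cos α := Real.cos_nonneg_of_mem_Icc ⟨by linarith, hα2⟩
  rcases eq_or_lt_of_le hρ0 with hρz | hρpos
  · have h0 : y1 ^ 2 + y2 ^ 2 = 0 := by nlinarith
    have h1 : y1 = 0 := by nlinarith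
    have h2 : y2 = 0 := by nlinarith
    simp [h1, h2]
  set c := y1 / ρ with hcdef
  set s := y2 / ρ with hsdef
  have hy1c : y1 = ρ * c := by rw [hcdef]; field_simp
  have hy2s : y2 = ρ * s := by rw [hsdef]; field_simp
  have hcs : c ^ 2 + s ^ 2 = 1 := by
    rw [hcdef, hsdef]
    field_simp
    linarith [hρsq]
  have hc : Real.cos α ≤ c := by
    rw [hcdef, le_div_iff₀ hρpos]
    linarith [hy]
  have hc0 : 0 ≤ c := le_trans hcosα0 hc
  have hs1 : s ^ 2 ≤ 1 := by linarith [sq_nonneg c]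
  have hsm : -1 ≤ s ∧ s ≤ 1 := abs_le.mp ((sq_le_one_iff_abs_le_one s).mp hs1)
  set φ := Real.arcsin s with hφdef
  have hφcos : Real.cos φ = c := by
    rw [hφdef, Real.cos_arcsin]
    have : 1 - s ^ 2 = c ^ 2 := by linarith
    rw [this, Real.sqrt_sq hc0]
  have hφsin : Real.sin φ = s := Real.sin_arcsin hsm.1 hsm.2
  have hφmem : -(Real.pi / 2) ≤ φ ∧ φ ≤ Real.pi / 2 :=
    ⟨Real.neg_pi_div_two_le_arcsin s, Real.arcsin_le_pi_div_two s⟩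
  have hφabs : |φ| ≤ α := by
    by_contra hcon
    push_neg at hcon
    have h1 : Real.cos |φ| < Real.cos α :=
      Real.cos_lt_cos_of_nonneg_of_le_pi hα0.le
        (by rcases abs_cases φ with ⟨h, _⟩ | ⟨h, _⟩ <;> linarith [Real.pi_pos]) hcon
    rw [Real.cos_abs, hφcos] at h1
    linarith
  rcases abs_le.mp hφabs with ⟨hφl, hφr⟩
  have hxl : α ≤ θ - φ := by linarith
  have hxu : θ - φ ≤ 2 * Real.pi - α := by linarith
  have hcosx : Real.cos (θ - φ) ≤ Real.cos α := by
    rcases le_or_gt (θ - φ) Real.pi with hle | hgt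
    · exact Real.cos_le_cos_of_nonneg_of_le_pi hα0.le hle hxl
    · rw [← Real.cos_two_pi_sub]
      exact Real.cos_le_cos_of_nonneg_of_le_pi hα0.le (by linarith) (by linarith)
  calc y1 * Real.cos θ + y2 * Real.sin θ
      = ρ * (Real.cos φ * Real.cos θ + Real.sin φ * Real.sin θ) := by
        rw [hφcos, hφsin, hy1c, hy2s]; ring
    _ = ρ * Real.cos (θ - φ) := by rw [Real.cos_sub]; ring_nf
    _ ≤ ρ * Real.cos α := mul_le_mul_of_nonneg_left hcosx hρ0
    _ ≤ y1 := hy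

/-- Reduction of a norm comparison to the first three coordinates, when the two
points agree on all later coordinates. -/
lemma norm_sub_le_aux {N : ℕ} (hN : 3 ≤ N) (y a b : EuclideanSpace ℝ (Fin N))
    (hout : ∀ i : Fin N, 3 ≤ (i : ℕ) → a i = b i)
    (h3 : (y ⟨0, by omega⟩ - a ⟨0, by omega⟩) ^ 2 + (y ⟨1, by omega⟩ - a ⟨1, by omega⟩) ^ 2
          + (y ⟨2, by omega⟩ - a ⟨2, by omega⟩) ^ 2
        ≤ (y ⟨0, by omega⟩ - b ⟨0, by omega⟩) ^ 2 + (y ⟨1, by omega⟩ - b ⟨1, by omega⟩) ^ 2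
          + (y ⟨2, by omega⟩ - b ⟨2, by omega⟩) ^ 2) :
    ‖y - a‖ ≤ ‖y - b‖ := by
  set i0 : Fin N := ⟨0, by omega⟩
  set i1 : Fin N := ⟨1, by omega⟩
  set i2 : Fin N := ⟨2, by omega⟩
  rw [EuclideanSpace.norm_eq, EuclideanSpace.norm_eq]
  apply Real.sqrt_le_sqrt
  have hsub : ∀ (v : EuclideanSpace ℝ (Fin N)) (i : Fin N), (y - v) i = y i - v i := by
    intro v i; rfl
  simp only [hsub, Real.norm_eq_abs, sq_abs]
  rw [← sub_nonneg, ← Finset.sum_sub_distrib]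
  set s : Finset (Fin N) := {i0, i1, i2} with hs
  have hzero : ∀ i ∈ Finset.univ, i ∉ s →
      ((y i - b i) ^ 2 - (y i - a i) ^ 2 : ℝ) = 0 := by
    intro i _ his
    simp only [hs, Finset.mem_insert, Finset.mem_singleton, not_or] at his
    have h3i : 3 ≤ (i : ℕ) := by
      rcases his with ⟨h0, h1, h2⟩
      have : (i : ℕ) ≠ 0 := fun h => h0 (Fin.ext h)
      have : (i : ℕ) ≠ 1 := fun h => h1 (Fin.ext h)
      have : (i : ℕ) ≠ 2 := fun h => h2 (Fin.ext h)
      omega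
    rw [hout i h3i]; ring
  rw [← Finset.sum_subset (Finset.subset_univ s) hzero]
  have h01 : i0 ≠ i1 := by simp [i0, i1, Fin.ext_iff]
  have h02 : i0 ≠ i2 := by simp [i0, i2, Fin.ext_iff]
  have h12 : i1 ≠ i2 := by simp [i1, i2, Fin.ext_iff]
  rw [hs, Finset.sum_insert (by simp [h01, h02]), Finset.sum_insert (by simp [h12]),
    Finset.sum_singleton]
  linarith

/-- For `N ≥ 3`, `k ≥ 2`, `r > 0`, `h ∈ (0,1)`, if
`y₁ ≥ √(y₁²+y₂²) cos(π/k)` and `y₃ ≥ 0` (i.e. `y ∈ Ω₁⁺`), then for every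
`j = 1, …, k` one has `|y − x̄_1| ≤ |y − x̄_j|`, `|y − x̄_j| ≤ |y − x̲_j|` and
`|y − x̄_1| ≤ |y − x̲_j|`. -/
theorem stmt_12 (N k : ℕ) (hN : 3 ≤ N) (hk : 2 ≤ k) (r h : ℝ) (hr : 0 < r)
    (hh : h ∈ Set.Ioo (0 : ℝ) 1) (y : EuclideanSpace ℝ (Fin N))
    (hy1 : Real.sqrt ((y ⟨0, by omega⟩) ^ 2 + (y ⟨1, by omega⟩) ^ 2) *
        Real.cos (Real.pi / k) ≤ y ⟨0, by omega⟩)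
    (hy3 : 0 ≤ y ⟨2, by omega⟩) :
    ∀ j : ℕ, 1 ≤ j → j ≤ k →
      ‖y - xbar N k r h 1‖ ≤ ‖y - xbar N k r h j‖ ∧
      ‖y - xbar N k r h j‖ ≤ ‖y - xunder N k r h j‖ ∧
      ‖y - xbar N k r h 1‖ ≤ ‖y - xunder N k r h j‖ := by
  intro j hj1 hjk
  set i0 : Fin N := ⟨0, by omega⟩
  set i1 : Fin N := ⟨1, by omega⟩
  set i2 : Fin N := ⟨2, by omega⟩
  set ρ' := Real.sqrt (1 - h ^ 2) with hρ'def
  have hρ'0 : 0 ≤ ρ' := Real.sqrt_nonneg _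
  set θ := 2 * ((j : ℝ) - 1) * Real.pi / k with hθdef
  -- coordinates of xbar
  have hb0 : ∀ m : ℕ, xbar N k r h m i0 = r * ρ' * Real.cos (2 * ((m : ℝ) - 1) * Real.pi / k) := by
    intro m; simp [xbar, i0, EuclideanSpace.equiv, ρ']
  have hb1 : ∀ m : ℕ, xbar N k r h m i1 = r * ρ' * Real.sin (2 * ((m : ℝ) - 1) * Real.pi / k) := by
    intro m; simp [xbar, i1, EuclideanSpace.equiv, ρ']
  have hb2 : ∀ m : ℕ, xbar N k r h m i2 = r * h := by
    intro m; simp [xbar, i2, EuclideanSpace.equiv]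
  have hu0 : ∀ m : ℕ, xunder N k r h m i0 = r * ρ' * Real.cos (2 * ((m : ℝ) - 1) * Real.pi / k) := by
    intro m; simp [xunder, i0, EuclideanSpace.equiv, ρ']
  have hu1 : ∀ m : ℕ, xunder N k r h m i1 = r * ρ' * Real.sin (2 * ((m : ℝ) - 1) * Real.pi / k) := by
    intro m; simp [xunder, i1, EuclideanSpace.equiv, ρ']
  have hu2 : ∀ m : ℕ, xunder N k r h m i2 = -(r * h) := by
    intro m; simp [xunder, i2, EuclideanSpace.equiv]
  have hbout : ∀ m : ℕ, ∀ i : Fin N, 3 ≤ (i : ℕ) → xbar N k r h m i = 0 := by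
    intro m i hi
    have h0 : (i : ℕ) ≠ 0 := by omega
    have h1 : (i : ℕ) ≠ 1 := by omega
    have h2 : (i : ℕ) ≠ 2 := by omega
    simp [xbar, EuclideanSpace.equiv, h0, h1, h2]
  have huout : ∀ m : ℕ, ∀ i : Fin N, 3 ≤ (i : ℕ) → xunder N k r h m i = 0 := by
    intro m i hi
    have h0 : (i : ℕ) ≠ 0 := by omega
    have h1 : (i : ℕ) ≠ 1 := by omega
    have h2 : (i : ℕ) ≠ 2 := by omega
    simp [xunder, EuclideanSpace.equiv, h0, h1, h2]
  -- the key angle inequality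
  have hkey : y i0 * Real.cos θ + y i1 * Real.sin θ ≤ y i0 :=
    key_angle k hk j hj1 hjk (y i0) (y i1) hy1
  have hpyth : Real.cos θ ^ 2 + Real.sin θ ^ 2 = 1 := by
    rw [add_comm]; exact Real.sin_sq_add_cos_sq θ
  have hzero1 : (2 : ℝ) * (((1 : ℕ) : ℝ) - 1) * Real.pi / k = 0 := by
    norm_num
  -- first inequality
  have hA : ‖y - xbar N k r h 1‖ ≤ ‖y - xbar N k r h j‖ := by
    apply norm_sub_le_aux hN
    · intro i hi; rw [hbout 1 i hi, hbout j i hi]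
    · rw [hb0, hb0, hb1, hb1, hb2, hb2, hzero1]
      simp only [Real.cos_zero, Real.sin_zero, mul_one, mul_zero]
      rw [← hθdef]
      nlinarith [mul_nonneg (mul_nonneg hr.le hρ'0) (sub_nonneg.mpr hkey), hpyth,
        sq_nonneg (r * ρ')]
  -- second inequality
  have hB : ‖y - xbar N k r h j‖ ≤ ‖y - xunder N k r h j‖ := by
    apply norm_sub_le_aux hN
    · intro i hi; rw [hbout j i hi, huout j i hi]
    · rw [hb0, hu0, hb1, hu1, hb2, hu2]
      nlinarith [mul_nonneg (mul_nonneg hy3 hr.le) hh.1.le]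
  exact ⟨hA, hB, le_trans hA hB⟩
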